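/- The factor polynomial satisfies e_{n-1}^*(1) = (-1)^{n+1} n for every positive integer n, where e_n(t) = (1-t) e_{n-1}^*(t). -/

import Mathlib

open Polynomial MeasureTheory

/-- Falling factorial `c(c-1)⋯(c-m+1)` for real `c`. -/
noncomputable def fallFac (c : ℝ) (m : ℕ) : ℝ := ∏ i ∈ Finset.range m, (c - i)

/-- The identity-type polynomial `e_n(t) = ∑_{m=0}^n ((n)_m (-n)_m / (m!)^2) t^m`. -/
noncomputable def idPoly (n : ℕ) : Polynomial ℝ :=
  ∑ m ∈ Finset.range (n + 1),
    Polynomial.C (fallFac (n : ℝ) m * fallFac (-(n : ℝ)) m / ((Nat.factorial m : ℝ)) ^ 2) *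
      Polynomial.X ^ m

lemma fallFac_neg_nat (n m : ℕ) :
    fallFac (-(n : ℝ)) m = (-1) ^ m * (n.ascFactorial m : ℝ) := by
  induction m with
  | zero => simp [fallFac]
  | succ k ih =>
    rw [fallFac, Finset.prod_range_succ, ← fallFac, ih, Nat.ascFactorial_succ]
    push_cast
    ring

lemma fallFac_nat (n m : ℕ) (h : m ≤ n) :
    fallFac (n : ℝ) m = (n.descFactorial m : ℝ) := by
  induction m with
  | zero => simp [fallFac]
  | succ k ih =>
    rw [fallFac, Finset.prod_range_succ, ← fallFac, ih (Nat.le_of_succ_le h),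
      Nat.descFactorial_succ, Nat.cast_mul, Nat.cast_sub (Nat.le_of_succ_le h)]
    ring

lemma coeff_eval (n m : ℕ) (hm : m ≤ n) :
    fallFac (n : ℝ) m * fallFac (-(n : ℝ)) m / ((Nat.factorial m : ℝ)) ^ 2
      = (-1) ^ m * (n.choose m : ℝ) * ((n + m - 1).choose m : ℝ) := by
  rw [fallFac_nat n m hm, fallFac_neg_nat, Nat.descFactorial_eq_factorial_mul_choose,
    Nat.ascFactorial_eq_factorial_mul_choose']
  have hf : ((Nat.factorial m : ℝ)) ≠ 0 := Nat.cast_ne_zero.mpr m.factorial_ne_zero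
  push_cast
  field_simp

lemma key (N : ℕ) :
    ∑ m ∈ Finset.range (N + 1),
      (-1 : ℝ) ^ m * (N.choose m : ℝ) * ((N + 1 + m).choose N : ℝ) = (-1) ^ N := by
  have h : (X : Polynomial ℝ) ^ N =
      ∑ m ∈ Finset.range (N + 1),
        C ((-1 : ℝ) ^ (m + N) * (N.choose m : ℝ)) * (1 + X) ^ m := by
    have h0 := sub_pow (1 + X : Polynomial ℝ) 1 N
    have hX : ((1 : Polynomial ℝ) + X) - 1 = X := by ring
    rw [hX] at h0
    rw [h0]
    refine Finset.sum_congr rfl fun m hm => ?_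
    simp only [map_mul, map_pow, map_neg, map_one, Polynomial.C_eq_natCast]
    ring
  have h2 := congrArg (fun p : Polynomial ℝ => ((1 + X) ^ (N + 1) * p).coeff N) h
  rw [mul_comm] at h2
  have hL : ((X : Polynomial ℝ) ^ N * (1 + X) ^ (N + 1)).coeff N = 1 := by
    have := Polynomial.coeff_X_pow_mul ((1 + X : Polynomial ℝ) ^ (N + 1)) N 0
    rw [zero_add] at this
    rw [this, coeff_one_add_X_pow, Nat.choose_zero_right, Nat.cast_one]
  rw [hL, Finset.mul_sum, Polynomial.finset_sum_coeff] at h2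
  have h3 : ∀ m ∈ Finset.range (N + 1),
      ((1 + X : Polynomial ℝ) ^ (N + 1) *
        (C ((-1 : ℝ) ^ (m + N) * (N.choose m : ℝ)) * (1 + X) ^ m)).coeff N
        = (-1 : ℝ) ^ (m + N) * (N.choose m : ℝ) * ((N + 1 + m).choose N : ℝ) := by
    intro m hm
    have hmul : (1 + X : Polynomial ℝ) ^ (N + 1) *
        (C ((-1 : ℝ) ^ (m + N) * (N.choose m : ℝ)) * (1 + X) ^ m)
        = C ((-1 : ℝ) ^ (m + N) * (N.choose m : ℝ)) * (1 + X) ^ (N + 1 + m) := by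
      rw [pow_add]; ring
    rw [hmul, Polynomial.coeff_C_mul, coeff_one_add_X_pow]
  rw [Finset.sum_congr rfl h3] at h2
  calc ∑ m ∈ Finset.range (N + 1),
        (-1 : ℝ) ^ m * (N.choose m : ℝ) * ((N + 1 + m).choose N : ℝ)
      = (-1 : ℝ) ^ N * ∑ m ∈ Finset.range (N + 1),
        (-1 : ℝ) ^ (m + N) * (N.choose m : ℝ) * ((N + 1 + m).choose N : ℝ) := by
        rw [Finset.mul_sum]
        refine Finset.sum_congr rfl fun m hm => ?_
        have hpow : (-1 : ℝ) ^ N * (-1 : ℝ) ^ (m + N) = (-1 : ℝ) ^ m := by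
          rw [← pow_add, show N + (m + N) = m + 2 * N by omega, pow_add, pow_mul]
          norm_num
        calc (-1 : ℝ) ^ m * (N.choose m : ℝ) * ((N + 1 + m).choose N : ℝ)
            = ((-1 : ℝ) ^ N * (-1 : ℝ) ^ (m + N)) * (N.choose m : ℝ) *
              ((N + 1 + m).choose N : ℝ) := by rw [hpow]
          _ = (-1 : ℝ) ^ N * ((-1 : ℝ) ^ (m + N) * (N.choose m : ℝ) *
              ((N + 1 + m).choose N : ℝ)) := by ring
    _ = (-1 : ℝ) ^ N * 1 := by rw [← h2]
    _ = (-1 : ℝ) ^ N := by rw [mul_one]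

theorem factorPoly_eval_one (n : ℕ) (hn : 0 < n) (q : Polynomial ℝ)
    (hq : idPoly n = (1 - Polynomial.X) * q) :
    q.eval 1 = (-1 : ℝ) ^ (n + 1) * n := by
  obtain ⟨N, rfl⟩ : ∃ N, n = N + 1 := ⟨n - 1, (Nat.succ_pred_eq_of_pos hn).symm⟩
  have hA : (Polynomial.derivative (idPoly (N + 1))).eval 1 = -q.eval 1 := by
    rw [hq, derivative_mul]
    simp
  have hB : (Polynomial.derivative (idPoly (N + 1))).eval 1 =
      ∑ m ∈ Finset.range (N + 1 + 1),
        (fallFac ((N + 1 : ℕ) : ℝ) m * fallFac (-((N + 1 : ℕ) : ℝ)) m /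
          ((Nat.factorial m : ℝ)) ^ 2) * m := by
    simp [idPoly, derivative_sum, derivative_C_mul, derivative_X_pow, eval_finset_sum]
  have hC : ∑ m ∈ Finset.range (N + 1 + 1),
      (fallFac ((N + 1 : ℕ) : ℝ) m * fallFac (-((N + 1 : ℕ) : ℝ)) m /
        ((Nat.factorial m : ℝ)) ^ 2) * m
      = ∑ m ∈ Finset.range (N + 1 + 1),
        ((-1 : ℝ) ^ m * ((N + 1).choose m : ℝ) * ((N + 1 + m - 1).choose m : ℝ)) * m := by
    refine Finset.sum_congr rfl fun m hm => ?_
    rw [coeff_eval (N + 1) m (Nat.lt_succ_iff.mp (Finset.mem_range.mp hm))]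
  have hD : ∑ m ∈ Finset.range (N + 1 + 1),
      ((-1 : ℝ) ^ m * ((N + 1).choose m : ℝ) * ((N + 1 + m - 1).choose m : ℝ)) * m
      = (-1) ^ (N + 1) * ((N + 1 : ℕ) : ℝ) := by
    rw [Finset.sum_range_succ']
    simp only [Nat.cast_zero, mul_zero, add_zero]
    have hE : ∀ k ∈ Finset.range (N + 1),
        ((-1 : ℝ) ^ (k + 1) * ((N + 1).choose (k + 1) : ℝ) *
          ((N + 1 + (k + 1) - 1).choose (k + 1) : ℝ)) * ((k + 1 : ℕ) : ℝ)
        = (-(((N + 1 : ℕ)) : ℝ)) *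
          ((-1 : ℝ) ^ k * (N.choose k : ℝ) * ((N + 1 + k).choose N : ℝ)) := by
      intro k _
      have h1 : N + 1 + (k + 1) - 1 = N + 1 + k := by omega
      have h2 : (N + 1 + k).choose (k + 1) = (N + 1 + k).choose N :=
        Nat.choose_symm_of_eq_add (by omega)
      have h3 : (N + 1) * N.choose k = (N + 1).choose (k + 1) * (k + 1) :=
        Nat.add_one_mul_choose_eq N k
      have h3' : ((N : ℝ) + 1) * (N.choose k : ℝ)
          = ((N + 1).choose (k + 1) : ℝ) * ((k : ℝ) + 1) := by
        exact_mod_cast congrArg (Nat.cast : ℕ → ℝ) h3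
      rw [h1, h2]
      push_cast
      linear_combination ((-1 : ℝ) ^ k * ((N + 1 + k).choose N : ℝ)) * h3'
    rw [Finset.sum_congr rfl hE, ← Finset.mul_sum, key N]
    push_cast
    ring
  rw [hB, hC, hD] at hA
  have hq1 : q.eval 1 = -((-1 : ℝ) ^ (N + 1) * ((N + 1 : ℕ) : ℝ)) := by linarith
  rw [hq1, pow_succ]
  push_cast
  ring
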